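/- Let θ ∈ [0,1), h = T/M with M ∈ ℕ, and let (a_m)_{0≤m≤M} be nonnegative reals satisfying a_m ≤ C₁ + C₂ h^{1−θ} ∑_{l=0}^{m−1} (m−l)^{−θ} a_l for all m, with constants C₁, C₂ ≥ 0. Then there exists a constant C depending only on C₁, C₂, T, θ (and not on M) such that a_m ≤ C for all m ∈ {0,…,M}. -/

import Mathlib

lemma aux_sum (θ : ℝ) (hθ0 : 0 ≤ θ) (hθ1 : θ < 1) (n : ℕ) :
    (1 - θ) * ∑ j ∈ Finset.range n, ((j : ℝ) + 1) ^ (-θ) ≤ (n : ℝ) ^ (1 - θ) := by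
  induction n with
  | zero => simp [Real.zero_rpow (by linarith : (1:ℝ)-θ ≠ 0)]
  | succ n ih =>
    rw [Finset.sum_range_succ, mul_add]
    have hx : (0:ℝ) < (n:ℝ) + 1 := by positivity
    have key : ((n:ℝ)) ^ (1-θ) + (1-θ) * ((n:ℝ)+1) ^ (-θ) ≤ ((n:ℝ)+1) ^ (1-θ) := by
      have hb : (1 + (-1/((n:ℝ)+1))) ^ (1-θ) ≤ 1 + (1-θ) * (-1/((n:ℝ)+1)) := by
        apply rpow_one_add_le_one_add_mul_self _ (by linarith) (by linarith)
        rw [neg_div, neg_le_neg_iff, div_le_one hx]; linarith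
      have hn : (n:ℝ) = ((n:ℝ)+1) * (1 + (-1/((n:ℝ)+1))) := by
        field_simp
        ring
      have hnn : (0:ℝ) ≤ 1 + (-1/((n:ℝ)+1)) := by
        rw [neg_div]
        have : 1/((n:ℝ)+1) ≤ 1 := by rw [div_le_one hx]; linarith
        linarith
      have h1 : ((n:ℝ)) ^ (1-θ) = ((n:ℝ)+1)^(1-θ) * (1 + (-1/((n:ℝ)+1)))^(1-θ) := by
        conv_lhs => rw [hn]
        exact Real.mul_rpow hx.le hnn
      have h2 : ((n:ℝ)+1)^(1-θ) * (1 + (-1/((n:ℝ)+1)))^(1-θ)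
          ≤ ((n:ℝ)+1)^(1-θ) * (1 + (1-θ) * (-1/((n:ℝ)+1))) :=
        mul_le_mul_of_nonneg_left hb (Real.rpow_nonneg hx.le _)
      have h3 : ((n:ℝ)+1)^(1-θ) * (1 + (1-θ) * (-1/((n:ℝ)+1)))
          = ((n:ℝ)+1)^(1-θ) - (1-θ) * (((n:ℝ)+1)^(1-θ) / ((n:ℝ)+1)) := by
        ring
      have h4 : ((n:ℝ)+1)^(1-θ) / ((n:ℝ)+1) = ((n:ℝ)+1) ^ (-θ) := by
        rw [div_eq_iff hx.ne', ← Real.rpow_add_one hx.ne' (-θ)]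
        congr 1
        ring
      have := h1 ▸ (h2.trans_eq (h3.trans (by rw [h4])))
      linarith
    push_cast
    linarith

lemma shift_sum (θ : ℝ) (k m : ℕ) (hkm : k ≤ m) :
    ∑ l ∈ Finset.Ico k m, ((m : ℝ) - (l : ℝ)) ^ (-θ)
      = ∑ j ∈ Finset.range (m - k), ((j : ℝ) + 1) ^ (-θ) := by
  rw [Finset.sum_Ico_eq_sum_range]
  rw [← Finset.sum_range_reflect]
  apply Finset.sum_congr rfl
  intro i hi
  rw [Finset.mem_range] at hi
  congr 1
  have hle : i + 1 ≤ m := by omega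
  have h2 : k + (m - k - 1 - i) = m - (i+1) := by omega
  rw [h2, Nat.cast_sub hle]
  push_cast
  ring

lemma weight_bound (θ h U : ℝ) (hθ0 : 0 ≤ θ) (hθ1 : θ < 1) (hh : 0 < h)
    (k m : ℕ) (hkm : k ≤ m) (hU : ((m - k : ℕ) : ℝ) * h ≤ U) (hU0 : 0 ≤ U) :
    h ^ (1-θ) * ∑ l ∈ Finset.Ico k m, ((m : ℝ) - (l : ℝ)) ^ (-θ)
      ≤ U ^ (1-θ) / (1-θ) := by
  have hp : (0:ℝ) < 1 - θ := by linarith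
  rw [shift_sum θ k m hkm]
  have h1 := aux_sum θ hθ0 hθ1 (m - k)
  have h2 : h ^ (1-θ) * ∑ j ∈ Finset.range (m-k), ((j:ℝ)+1)^(-θ)
      ≤ h ^ (1-θ) * (((m-k:ℕ):ℝ) ^ (1-θ) / (1-θ)) := by
    apply mul_le_mul_of_nonneg_left _ (Real.rpow_nonneg hh.le _)
    rw [le_div_iff₀ hp]
    linarith
  refine h2.trans ?_
  have h3 : ((m-k:ℕ):ℝ)^(1-θ) * h^(1-θ) ≤ U^(1-θ) := by
    rw [← Real.mul_rpow (Nat.cast_nonneg _) hh.le]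
    exact Real.rpow_le_rpow (by positivity) hU hp.le
  have he : h^(1-θ) * (((m-k:ℕ):ℝ)^(1-θ)/(1-θ)) = (((m-k:ℕ):ℝ)^(1-θ) * h^(1-θ))/(1-θ) := by
    ring
  rw [he]
  exact (div_le_div_iff_of_pos_right hp).mpr h3


set_option maxHeartbeats 1600000 in
/-- Generalized discrete Gronwall lemma with weakly singular kernel: if `θ ∈ [0,1)`,
`h = T/M`, and nonnegative `(a_m)` satisfy
`a_m ≤ C₁ + C₂ h^{1−θ} ∑_{l=0}^{m−1} (m−l)^{−θ} a_l`, then `a_m ≤ C` for a constant `C`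
depending only on `C₁, C₂, T, θ` (not on `M`). -/
theorem stmt_13 (θ T C₁ C₂ : ℝ) (hθ0 : 0 ≤ θ) (hθ1 : θ < 1) (hT : 0 < T)
    (hC₁ : 0 ≤ C₁) (hC₂ : 0 ≤ C₂) :
    ∃ C : ℝ, ∀ M : ℕ, 0 < M → ∀ a : ℕ → ℝ, (∀ m, 0 ≤ a m) →
      (∀ m ≤ M, a m ≤ C₁ + C₂ * (T / M) ^ (1 - θ) *
        ∑ l ∈ Finset.range m, ((m : ℝ) - (l : ℝ)) ^ (-θ) * a l) →
      ∀ m ≤ M, a m ≤ C := by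
  have hp : (0:ℝ) < 1 - θ := by linarith
  set τ : ℝ := min T (((1-θ) / (2*(C₂+1))) ^ (1/(1-θ))) with hτdef
  have hτ0 : 0 < τ := lt_min hT (Real.rpow_pos_of_pos (by positivity) _)
  have hτT : τ ≤ T := min_le_left _ _
  have hτ1 : τ ^ (1-θ) ≤ (1-θ)/(2*(C₂+1)) := by
    have hb0 : (0:ℝ) ≤ (1-θ)/(2*(C₂+1)) := by positivity
    calc τ ^ (1-θ) ≤ ((((1-θ)/(2*(C₂+1))) ^ (1/(1-θ)))) ^ (1-θ) :=
          Real.rpow_le_rpow hτ0.le (min_le_right _ _) hp.le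
      _ = ((1-θ)/(2*(C₂+1))) ^ ((1/(1-θ)) * (1-θ)) := (Real.rpow_mul hb0 _ _).symm
      _ = (1-θ)/(2*(C₂+1)) := by
          rw [one_div, inv_mul_cancel₀ hp.ne', Real.rpow_one]
  have hτkey : C₂ * τ ^ (1-θ) / (1-θ) ≤ 1/2 := by
    rw [div_le_iff₀ hp]
    have h1 : C₂ * τ ^ (1-θ) ≤ C₂ * ((1-θ)/(2*(C₂+1))) :=
      mul_le_mul_of_nonneg_left hτ1 hC₂
    have h2 : C₂ * ((1-θ)/(2*(C₂+1))) ≤ 1/2*(1-θ) := by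
      have h3 : C₂ * ((1-θ)/(2*(C₂+1))) = (1-θ) * (C₂/(2*(C₂+1))) := by ring
      have h4 : C₂/(2*(C₂+1)) ≤ 1/2 := by
        rw [div_le_iff₀ (by positivity)]; linarith
      rw [h3]
      nlinarith
    linarith
  set S : ℝ := T^(1-θ)/(1-θ) with hSdef
  have hS0 : 0 ≤ S := by positivity
  set A : ℝ := max 4 (4*(C₂*S)) with hAdef
  have hA4 : (4:ℝ) ≤ A := le_max_left _ _
  have hA1 : (1:ℝ) ≤ A := by linarith
  have hA0 : (0:ℝ) ≤ A := by linarith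
  have hACS : C₂*S ≤ A/4 := by
    have := le_max_right (4:ℝ) (4*(C₂*S)); linarith
  refine ⟨C₁ * A ^ (⌈T/τ⌉₊), ?_⟩
  intro M hM a ha hrec
  have hM0 : (0:ℝ) < (M:ℝ) := by exact_mod_cast hM
  have hh : (0:ℝ) < T / M := div_pos hT hM0
  have hMh : (M:ℝ) * (T/M) = T := by field_simp
  have main : ∀ m, m ≤ M → a m ≤ C₁ * A ^ (⌈(m:ℝ) * (T/M) / τ⌉₊) := by
    intro m
    induction m using Nat.strong_induction_on with
    | _ m ih =>
    intro hmM
    rcases Nat.eq_zero_or_pos m with rfl | hm0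
    · have h0 := hrec 0 (Nat.zero_le M)
      simp only [Finset.range_zero, Finset.sum_empty, mul_zero, add_zero] at h0
      exact h0.trans (le_mul_of_one_le_right hC₁ (one_le_pow₀ hA1))
    · set k := ⌈(m:ℝ) * (T/M) / τ⌉₊ with hkdef
      have hm0' : (0:ℝ) < (m:ℝ) := by exact_mod_cast hm0
      have hk1 : 1 ≤ k := Nat.ceil_pos.mpr (by positivity)
      set n := ⌊τ/(T/M)⌋₊ with hndef
      have hnh : (n:ℝ) * (T/M) ≤ τ := by
        have h1 : (n:ℝ) ≤ τ/(T/M) := Nat.floor_le (le_of_lt (div_pos hτ0 hh))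
        calc (n:ℝ)*(T/M) ≤ (τ/(T/M))*(T/M) := mul_le_mul_of_nonneg_right h1 hh.le
          _ = τ := div_mul_cancel₀ _ hh.ne'
      have hτn : τ < ((n:ℝ)+1)*(T/M) := by
        have h1 : τ/(T/M) < (n:ℝ)+1 := Nat.lt_floor_add_one _
        calc τ = (τ/(T/M))*(T/M) := (div_mul_cancel₀ _ hh.ne').symm
          _ < ((n:ℝ)+1)*(T/M) := mul_lt_mul_of_pos_right h1 hh
      set s := m - n with hsdef
      have hsm : s ≤ m := Nat.sub_le m n
      have hsplit : ∑ l ∈ Finset.range m, ((m:ℝ)-(l:ℝ))^(-θ) * a l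
          = ∑ l ∈ Finset.Ico 0 s, ((m:ℝ)-(l:ℝ))^(-θ) * a l
            + ∑ l ∈ Finset.Ico s m, ((m:ℝ)-(l:ℝ))^(-θ) * a l := by
        rw [Finset.range_eq_Ico, ← Finset.sum_Ico_consecutive _ (Nat.zero_le s) hsm]
      have hbase : ∀ l < m, (0:ℝ) ≤ (m:ℝ)-(l:ℝ) := by
        intro l hl
        have : (l:ℝ) ≤ (m:ℝ) := by exact_mod_cast hl.le
        linarith
      -- recent part
      have hrec_bd : ∑ l ∈ Finset.Ico s m, ((m:ℝ)-(l:ℝ))^(-θ) * a l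
          ≤ (∑ l ∈ Finset.Ico s m, ((m:ℝ)-(l:ℝ))^(-θ)) * (C₁ * A^k) := by
        rw [Finset.sum_mul]
        apply Finset.sum_le_sum
        intro l hl
        rw [Finset.mem_Ico] at hl
        have h1 : a l ≤ C₁ * A ^ (⌈(l:ℝ)*(T/M)/τ⌉₊) := ih l hl.2 (le_trans hl.2.le hmM)
        have h2 : ⌈(l:ℝ)*(T/M)/τ⌉₊ ≤ k := by
          apply Nat.ceil_le_ceil
          have : (l:ℝ) ≤ (m:ℝ) := by exact_mod_cast hl.2.le
          gcongr
        have h3 : C₁ * A ^ (⌈(l:ℝ)*(T/M)/τ⌉₊) ≤ C₁ * A^k :=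
          mul_le_mul_of_nonneg_left (pow_le_pow_right₀ hA1 h2) hC₁
        exact mul_le_mul_of_nonneg_left (h1.trans h3)
          (Real.rpow_nonneg (hbase l hl.2) _)
      have hWrec : C₂ * (T/M)^(1-θ) * ∑ l ∈ Finset.Ico s m, ((m:ℝ)-(l:ℝ))^(-θ) ≤ 1/2 := by
        have hside : ((m - s : ℕ):ℝ) * (T/M) ≤ τ := by
          have h1 : m - s ≤ n := by omega
          calc ((m-s:ℕ):ℝ)*(T/M) ≤ (n:ℝ)*(T/M) :=
                mul_le_mul_of_nonneg_right (by exact_mod_cast h1) hh.le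
            _ ≤ τ := hnh
        have hw := weight_bound θ (T/M) τ hθ0 hθ1 hh s m hsm hside hτ0.le
        calc C₂ * (T/M)^(1-θ) * ∑ l ∈ Finset.Ico s m, ((m:ℝ)-(l:ℝ))^(-θ)
            = C₂ * ((T/M)^(1-θ) * ∑ l ∈ Finset.Ico s m, ((m:ℝ)-(l:ℝ))^(-θ)) := by ring
          _ ≤ C₂ * (τ^(1-θ)/(1-θ)) := mul_le_mul_of_nonneg_left hw hC₂
          _ = C₂ * τ^(1-θ)/(1-θ) := by ring
          _ ≤ 1/2 := hτkey
      -- old part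
      have hold_bd : ∑ l ∈ Finset.Ico 0 s, ((m:ℝ)-(l:ℝ))^(-θ) * a l
          ≤ (∑ l ∈ Finset.Ico 0 s, ((m:ℝ)-(l:ℝ))^(-θ)) * (C₁ * A^(k-1)) := by
        rw [Finset.sum_mul]
        apply Finset.sum_le_sum
        intro l hl
        rw [Finset.mem_Ico] at hl
        have hls : l < s := hl.2
        have hlm : l < m := lt_of_lt_of_le hls hsm
        have h1 : a l ≤ C₁ * A ^ (⌈(l:ℝ)*(T/M)/τ⌉₊) := ih l hlm (le_trans hlm.le hmM)
        have h2 : ⌈(l:ℝ)*(T/M)/τ⌉₊ ≤ k - 1 := by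
          rw [Nat.ceil_le]
          have hc : ((k-1:ℕ):ℝ) = (k:ℝ) - 1 := by
            rw [Nat.cast_sub hk1]; norm_num
          rw [hc, div_le_iff₀ hτ0]
          have f1 : (l:ℝ) + (n:ℝ) + 1 ≤ (m:ℝ) := by
            have : l + n + 1 ≤ m := by omega
            exact_mod_cast this
          have f2 : (m:ℝ)*(T/M) ≤ (k:ℝ)*τ := by
            have := Nat.le_ceil ((m:ℝ)*(T/M)/τ)
            rw [div_le_iff₀ hτ0] at this
            exact this
          have f3 : (l:ℝ)*(T/M) ≤ ((m:ℝ)-(n:ℝ)-1)*(T/M) :=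
            mul_le_mul_of_nonneg_right (by linarith) hh.le
          nlinarith
        have h3 : C₁ * A ^ (⌈(l:ℝ)*(T/M)/τ⌉₊) ≤ C₁ * A^(k-1) :=
          mul_le_mul_of_nonneg_left (pow_le_pow_right₀ hA1 h2) hC₁
        exact mul_le_mul_of_nonneg_left (h1.trans h3)
          (Real.rpow_nonneg (hbase l hlm) _)
      have hWold : C₂ * (T/M)^(1-θ) * ∑ l ∈ Finset.Ico 0 s, ((m:ℝ)-(l:ℝ))^(-θ) ≤ C₂ * S := by
        have hsub : ∑ l ∈ Finset.Ico 0 s, ((m:ℝ)-(l:ℝ))^(-θ)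
            ≤ ∑ l ∈ Finset.Ico 0 m, ((m:ℝ)-(l:ℝ))^(-θ) := by
          apply Finset.sum_le_sum_of_subset_of_nonneg
            (Finset.Ico_subset_Ico le_rfl hsm)
          intro l hl _
          rw [Finset.mem_Ico] at hl
          exact Real.rpow_nonneg (hbase l hl.2) _
        have hside : ((m - 0 : ℕ):ℝ) * (T/M) ≤ T := by
          have h1 : (m:ℝ) ≤ (M:ℝ) := by exact_mod_cast hmM
          calc ((m - 0:ℕ):ℝ)*(T/M) = (m:ℝ)*(T/M) := by norm_num
            _ ≤ (M:ℝ)*(T/M) := mul_le_mul_of_nonneg_right h1 hh.le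
            _ = T := hMh
        have hw := weight_bound θ (T/M) T hθ0 hθ1 hh 0 m (Nat.zero_le m) hside hT.le
        calc C₂ * (T/M)^(1-θ) * ∑ l ∈ Finset.Ico 0 s, ((m:ℝ)-(l:ℝ))^(-θ)
            ≤ C₂ * (T/M)^(1-θ) * ∑ l ∈ Finset.Ico 0 m, ((m:ℝ)-(l:ℝ))^(-θ) := by
              apply mul_le_mul_of_nonneg_left hsub
              positivity
          _ = C₂ * ((T/M)^(1-θ) * ∑ l ∈ Finset.Ico 0 m, ((m:ℝ)-(l:ℝ))^(-θ)) := by ring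
          _ ≤ C₂ * (T^(1-θ)/(1-θ)) := mul_le_mul_of_nonneg_left hw hC₂
          _ = C₂ * S := by rw [hSdef]
      -- combine
      have hAk : A^k = A * A^(k-1) := by
        conv_lhs => rw [show k = (k-1)+1 from (Nat.succ_pred_eq_of_pos hk1).symm]
        rw [pow_succ]
        ring
      have hC1k : 4 * C₁ ≤ C₁ * A^k := by
        have h1 : A^1 ≤ A^k := pow_le_pow_right₀ hA1 hk1
        rw [pow_one] at h1
        nlinarith
      have hCp : (0:ℝ) ≤ C₂ * (T/M)^(1-θ) := by positivity
      have hCk0 : (0:ℝ) ≤ C₁ * A^k := by positivity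
      have hCk10 : (0:ℝ) ≤ C₁ * A^(k-1) := by positivity
      have t1 : C₂ * (T/M)^(1-θ) * ∑ l ∈ Finset.Ico s m, ((m:ℝ)-(l:ℝ))^(-θ) * a l
          ≤ 1/2 * (C₁ * A^k) := by
        calc C₂ * (T/M)^(1-θ) * ∑ l ∈ Finset.Ico s m, ((m:ℝ)-(l:ℝ))^(-θ) * a l
            ≤ C₂ * (T/M)^(1-θ) * ((∑ l ∈ Finset.Ico s m, ((m:ℝ)-(l:ℝ))^(-θ)) * (C₁ * A^k)) :=
              mul_le_mul_of_nonneg_left hrec_bd hCp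
          _ = (C₂ * (T/M)^(1-θ) * ∑ l ∈ Finset.Ico s m, ((m:ℝ)-(l:ℝ))^(-θ)) * (C₁ * A^k) := by
              ring
          _ ≤ 1/2 * (C₁ * A^k) := mul_le_mul_of_nonneg_right hWrec hCk0
      have t2 : C₂ * (T/M)^(1-θ) * ∑ l ∈ Finset.Ico 0 s, ((m:ℝ)-(l:ℝ))^(-θ) * a l
          ≤ 1/4 * (C₁ * A^k) := by
        calc C₂ * (T/M)^(1-θ) * ∑ l ∈ Finset.Ico 0 s, ((m:ℝ)-(l:ℝ))^(-θ) * a l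
            ≤ C₂ * (T/M)^(1-θ) * ((∑ l ∈ Finset.Ico 0 s, ((m:ℝ)-(l:ℝ))^(-θ)) * (C₁ * A^(k-1))) :=
              mul_le_mul_of_nonneg_left hold_bd hCp
          _ = (C₂ * (T/M)^(1-θ) * ∑ l ∈ Finset.Ico 0 s, ((m:ℝ)-(l:ℝ))^(-θ)) * (C₁ * A^(k-1)) := by
              ring
          _ ≤ (C₂ * S) * (C₁ * A^(k-1)) := mul_le_mul_of_nonneg_right hWold hCk10
          _ ≤ (A/4) * (C₁ * A^(k-1)) := mul_le_mul_of_nonneg_right hACS hCk10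
          _ = 1/4 * (C₁ * (A * A^(k-1))) := by ring
          _ = 1/4 * (C₁ * A^k) := by rw [← hAk]
      have hrm := hrec m hmM
      rw [hsplit, mul_add] at hrm
      linarith
  intro m hmM
  refine (main m hmM).trans ?_
  have hk : ⌈(m:ℝ)*(T/M)/τ⌉₊ ≤ ⌈T/τ⌉₊ := by
    apply Nat.ceil_le_ceil
    have h1 : (m:ℝ) ≤ (M:ℝ) := by exact_mod_cast hmM
    have h2 : (m:ℝ)*(T/M) ≤ T := by
      calc (m:ℝ)*(T/M) ≤ (M:ℝ)*(T/M) := mul_le_mul_of_nonneg_right h1 hh.le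
        _ = T := hMh
    gcongr
  exact mul_le_mul_of_nonneg_left (pow_le_pow_right₀ hA1 hk) hC₁
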